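/- For any two projection operators f and g on a complex Hilbert space and any natural number m ≥ 1, ‖(f∘g)^m‖ ≤ ‖f∘g‖^(2m−1). -/

import Mathlib

open ContinuousLinearMap

theorem norm_pow_fg_le
    {H : Type*} [NormedAddCommGroup H] [InnerProductSpace ℂ H] [CompleteSpace H]
    (f g : H →L[ℂ] H)
    (hf : f ∘L f = f) (hf' : adjoint f = f)
    (hg : g ∘L g = g) (hg' : adjoint g = g)
    (m : ℕ) (hm : 1 ≤ m) :
    ‖(f ∘L g) ^ m‖ ≤ ‖f ∘L g‖ ^ (2 * m - 1) := by
  set T : H →L[ℂ] H := f ∘L g with hT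
  set A : H →L[ℂ] H := star T * T with hA
  have hfm : f * f = f := hf
  have hgm : g * g = g := hg
  have hf2 : ∀ x : H →L[ℂ] H, f * (f * x) = f * x := fun x => by rw [← mul_assoc, hfm]
  have hg2 : ∀ x : H →L[ℂ] H, g * (g * x) = g * x := fun x => by rw [← mul_assoc, hgm]
  have hstar : star T = g * f := by
    show adjoint T = g * f
    rw [hT, adjoint_comp, hf', hg']
    rfl
  have hTA : T * A = T * T := by
    have hTmul : T = f * g := rfl
    rw [hA, hstar, hTmul]
    simp only [mul_assoc, hg2, hf2]
  have key : ∀ k : ℕ, T ^ (k + 1) = T * A ^ k := by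
    intro k
    induction k with
    | zero => simp
    | succ n ih =>
      rw [pow_succ', ih, ← mul_assoc, ← hTA, mul_assoc, ← pow_succ']
  have hAnorm : ‖A‖ = ‖T‖ ^ 2 := by
    rw [hA, CStarRing.norm_star_mul_self, sq]
  obtain ⟨k, rfl⟩ : ∃ k, m = k + 1 := ⟨m - 1, by omega⟩
  calc ‖T ^ (k + 1)‖ = ‖T * A ^ k‖ := by rw [key]
    _ ≤ ‖T‖ * ‖A ^ k‖ := norm_mul_le _ _
    _ ≤ ‖T‖ * ‖A‖ ^ k := by
        gcongr
        cases k with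
        | zero => have h1 : ‖(1 : H →L[ℂ] H)‖ ≤ 1 := ContinuousLinearMap.norm_id_le; simpa using h1
        | succ n => exact norm_pow_le' A n.succ_pos
    _ = ‖T‖ ^ (2 * (k + 1) - 1) := by
        rw [hAnorm, ← pow_mul, ← pow_succ']
        congr 1
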